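/- Let 𝔹^d ⊂ ℝ^d (d ≥ 2) be the open unit ball, x ∈ 𝔹^d, and v ∈ ℝ^d nonzero. Let ξ ∈ ∂𝔹^d be a point on the line x + ℝv closest to x, i.e. ‖x − ξ‖ = dist(x, (x + ℝv) ∩ ∂𝔹^d). Then there exists an affine hyperplane H containing x with direction containing v such that dist(x, (x + H') ∩ ∂𝔹^d) ≥ ‖x − ξ‖, where H' is the (d−1)-dimensional linear subspace of directions of H; consequently δ^{(d−1)}_{𝔹^d}(x,v) = δ^{(1)}_{𝔹^d}(x,v), where δ^{(k)}_{𝔹^d}(x,v) = sup over k-dimensional subspaces V containing v of dist(x, (x+V) ∩ ∂𝔹^d). -/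

import Mathlib

open RealInnerProductSpace Metric Module

lemma stmt_11_aux (d : ℕ) (v p : EuclideanSpace ℝ (Fin d)) (r σ : ℝ)
    (hv2 : (0:ℝ) < ‖v‖) (hpv' : ⟪p, v⟫ = 0) (hσ2 : σ^2 = 1)
    (hr2 : r^2 = 1 - ‖p‖^2) :
    ‖p + (σ * r / ‖v‖) • v‖ = 1 := by
  have h1 : ‖p + (σ * r / ‖v‖) • v‖^2 = 1 := by
    rw [norm_add_sq_real, real_inner_smul_right, hpv', norm_smul, Real.norm_eq_abs,
      mul_pow, sq_abs, div_pow, mul_pow, hσ2]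
    field_simp
    nlinarith [hr2]
  calc ‖p + (σ * r / ‖v‖) • v‖ = Real.sqrt (‖p + (σ * r / ‖v‖) • v‖^2) :=
        (Real.sqrt_sq (norm_nonneg _)).symm
  _ = 1 := by rw [h1]; exact Real.sqrt_one

set_option maxHeartbeats 1000000 in
theorem stmt_11 (d : ℕ) (hd : 2 ≤ d) (x v ξ : EuclideanSpace ℝ (Fin d))
    (hx : ‖x‖ < 1) (hv : v ≠ 0)
    (hξs : ‖ξ‖ = 1) (hξl : ∃ t : ℝ, ξ = x + t • v)
    (hξd : ‖x - ξ‖ = Metric.infDist x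
      ({z : EuclideanSpace ℝ (Fin d) | ∃ t : ℝ, z = x + t • v} ∩ {y | ‖y‖ = 1})) :
    (∃ V : Submodule ℝ (EuclideanSpace ℝ (Fin d)),
      Module.finrank ℝ V = d - 1 ∧ v ∈ V ∧
      ‖x - ξ‖ ≤ Metric.infDist x
        ({z : EuclideanSpace ℝ (Fin d) | ∃ w ∈ V, z = x + w} ∩ {y | ‖y‖ = 1})) ∧
    (⨆ V ∈ {V : Submodule ℝ (EuclideanSpace ℝ (Fin d)) |
        Module.finrank ℝ V = d - 1 ∧ v ∈ V},
      Metric.infDist x ({z : EuclideanSpace ℝ (Fin d) | ∃ w ∈ V, z = x + w} ∩ {y | ‖y‖ = 1}))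
    = ⨆ V ∈ {V : Submodule ℝ (EuclideanSpace ℝ (Fin d)) |
        Module.finrank ℝ V = 1 ∧ v ∈ V},
      Metric.infDist x
        ({z : EuclideanSpace ℝ (Fin d) | ∃ w ∈ V, z = x + w} ∩ {y | ‖y‖ = 1}) := by
  have hv2 : (0:ℝ) < ‖v‖ := norm_pos_iff.mpr hv
  set c : ℝ := ⟪v, x⟫ / ‖v‖^2 with hc
  set p := x - c • v with hp
  have hpv : ⟪v, p⟫ = 0 := by
    simp only [hp, inner_sub_right, real_inner_smul_right, hc, real_inner_self_eq_norm_sq]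
    field_simp
    ring
  have hpv' : ⟪p, v⟫ = 0 := by rw [real_inner_comm]; exact hpv
  have hx_eq : x = p + c • v := by simp [hp]
  -- norm decomposition of x
  have hnx : ‖x‖^2 = ‖p‖^2 + c^2 * ‖v‖^2 := by
    rw [hx_eq, norm_add_sq_real]
    rw [real_inner_smul_right, hpv']
    rw [norm_smul, Real.norm_eq_abs, mul_pow, sq_abs]
    ring
  have hx2 : ‖x‖^2 < 1 := by
    have := norm_nonneg x
    nlinarith
  have hp2 : ‖p‖^2 ≤ ‖x‖^2 := by nlinarith [sq_nonneg c, sq_nonneg ‖v‖]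
  set r : ℝ := Real.sqrt (1 - ‖p‖^2) with hr
  have hr0 : 0 ≤ r := Real.sqrt_nonneg _
  have hr2 : r^2 = 1 - ‖p‖^2 := Real.sq_sqrt (by nlinarith)
  have hcv : |c| * ‖v‖ ≤ r := by
    have h1 : (|c| * ‖v‖)^2 ≤ r^2 := by
      rw [mul_pow, sq_abs, hr2]; nlinarith
    nlinarith [abs_nonneg c, norm_nonneg v, mul_nonneg (abs_nonneg c) (norm_nonneg v)]
  -- choose u
  obtain ⟨u, hu0, huv, hup⟩ : ∃ u : EuclideanSpace ℝ (Fin d), u ≠ 0 ∧ ⟪v, u⟫ = 0 ∧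
      ∀ w, ⟪u, w⟫ = 0 → ⟪p, w⟫ = 0 := by
    by_cases hp0 : p = 0
    · have hne : ((ℝ ∙ v)ᗮ : Submodule ℝ (EuclideanSpace ℝ (Fin d))) ≠ ⊥ := by
        intro hbot
        have h1 := Submodule.finrank_add_finrank_orthogonal (K := (ℝ ∙ v : Submodule ℝ (EuclideanSpace ℝ (Fin d))))
        rw [hbot] at h1
        have h2 : finrank ℝ (ℝ ∙ v : Submodule ℝ (EuclideanSpace ℝ (Fin d))) = 1 :=
          finrank_span_singleton hv
        have h3 : finrank ℝ (EuclideanSpace ℝ (Fin d)) = d := finrank_euclideanSpace_fin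
        simp [h2, h3] at h1
        omega
      obtain ⟨u, hu, hne'⟩ := Submodule.exists_mem_ne_zero_of_ne_bot hne
      exact ⟨u, hne', Submodule.mem_orthogonal_singleton_iff_inner_right.mp hu,
        fun w _ => by simp [hp0]⟩
    · exact ⟨p, hp0, hpv, fun w h => h⟩
  -- the hyperplane
  set V : Submodule ℝ (EuclideanSpace ℝ (Fin d)) := (ℝ ∙ u)ᗮ with hV
  have hVrank : finrank ℝ V = d - 1 := by
    rw [hV]
    have h1 := Submodule.finrank_add_finrank_orthogonal (K := (ℝ ∙ u : Submodule ℝ (EuclideanSpace ℝ (Fin d))))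
    have h2 : finrank ℝ (ℝ ∙ u : Submodule ℝ (EuclideanSpace ℝ (Fin d))) = 1 :=
      finrank_span_singleton hu0
    have h3 : finrank ℝ (EuclideanSpace ℝ (Fin d)) = d := finrank_euclideanSpace_fin
    rw [h2, h3] at h1
    omega
  have hvV : v ∈ V := Submodule.mem_orthogonal_singleton_iff_inner_left.mpr huv
  -- the witness point ξ₀ on the line
  obtain ⟨σ, hσ2, hσabs⟩ : ∃ σ : ℝ, σ^2 = 1 ∧ |σ * r - c * ‖v‖| = r - |c| * ‖v‖ := by
    rcases le_or_gt 0 c with h | h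
    · refine ⟨1, by norm_num, ?_⟩
      rw [abs_of_nonneg h]
      rw [abs_of_nonneg (by rw [abs_of_nonneg h] at hcv; linarith)]
      ring
    · refine ⟨-1, by norm_num, ?_⟩
      rw [abs_of_neg h]
      rw [abs_of_nonpos (by rw [abs_of_neg h] at hcv; linarith)]
      ring
  set t₀ : ℝ := σ * r / ‖v‖ - c with ht₀
  set ξ₀ : EuclideanSpace ℝ (Fin d) := x + t₀ • v with hξ₀def
  have hξ₀p : ξ₀ = p + (σ * r / ‖v‖) • v := by
    rw [hξ₀def, hx_eq, ht₀]; module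
  have hξ₀norm : ‖ξ₀‖ = 1 := by
    rw [hξ₀p]
    exact stmt_11_aux d v p r σ hv2 hpv' hσ2 hr2
  have hdistξ₀ : dist x ξ₀ = r - |c| * ‖v‖ := by
    have h1 : dist x ξ₀ = |t₀| * ‖v‖ := by
      rw [dist_eq_norm, hξ₀def]
      simp [norm_smul]
    have h2 : t₀ * ‖v‖ = σ * r - c * ‖v‖ := by rw [ht₀]; field_simp
    calc dist x ξ₀ = |t₀| * ‖v‖ := h1
    _ = |t₀ * ‖v‖| := by rw [abs_mul, abs_of_pos hv2]
    _ = |σ * r - c * ‖v‖| := by rw [h2]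
    _ = r - |c| * ‖v‖ := hσabs
  have hξ₀mem : ξ₀ ∈ {z : EuclideanSpace ℝ (Fin d) | ∃ t : ℝ, z = x + t • v} ∩ {y | ‖y‖ = 1} :=
    ⟨⟨t₀, rfl⟩, hξ₀norm⟩
  set a : ℝ := ‖x - ξ‖ with ha
  have ha0 : 0 ≤ a := norm_nonneg _
  have ha_le : a ≤ r - |c| * ‖v‖ := by
    rw [hξd, ← hdistξ₀]
    exact Metric.infDist_le_dist_of_mem hξ₀mem
  -- Claim 1 : a ≤ infDist over hyperplane slice
  have hVne : ({z : EuclideanSpace ℝ (Fin d) | ∃ w ∈ V, z = x + w} ∩ {y | ‖y‖ = 1}).Nonempty :=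
    ⟨ξ₀, ⟨t₀ • v, V.smul_mem t₀ hvV, rfl⟩, hξ₀norm⟩
  have claim1 : a ≤ Metric.infDist x
      ({z : EuclideanSpace ℝ (Fin d) | ∃ w ∈ V, z = x + w} ∩ {y | ‖y‖ = 1}) := by
    have pointwise : ∀ y ∈ ({z : EuclideanSpace ℝ (Fin d) | ∃ w ∈ V, z = x + w} ∩ {y | ‖y‖ = 1}),
        a ≤ dist x y := by
      rintro y ⟨⟨w, hwV, rfl⟩, hy1⟩
      have hpw : ⟪p, w⟫ = 0 := hup w (by
        have := (Submodule.mem_orthogonal _ _).mp hwV u (Submodule.mem_span_singleton_self u)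
        exact this)
      have hy2 : ‖c • v + w‖^2 = r^2 := by
        have hdecomp : x + w = p + (c • v + w) := by rw [hx_eq]; abel
        have h1 : (1:ℝ) = ‖p‖^2 + ‖c • v + w‖^2 := by
          have := hy1
          simp only [Set.mem_setOf_eq] at this
          calc (1:ℝ) = ‖x + w‖^2 := by rw [this]; norm_num
          _ = ‖p‖^2 + 2 * ⟪p, c • v + w⟫ + ‖c • v + w‖^2 := by rw [hdecomp, norm_add_sq_real]
          _ = ‖p‖^2 + ‖c • v + w‖^2 := by rw [inner_add_right, real_inner_smul_right, hpv', hpw]; ring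
        rw [hr2]; linarith
      have hy3 : ‖c • v + w‖ = r := by
        have := norm_nonneg (c • v + w)
        nlinarith
      have hw : r - |c| * ‖v‖ ≤ ‖w‖ := by
        have h1 : ‖c • v + w‖ - ‖c • v‖ ≤ ‖(c • v + w) - c • v‖ := norm_sub_norm_le _ _
        have h2 : (c • v + w) - c • v = w := by abel
        rw [h2, hy3, norm_smul, Real.norm_eq_abs] at h1
        exact h1
      have hdy : dist x (x + w) = ‖w‖ := by
        rw [dist_eq_norm]
        simp
      rw [hdy]
      linarith
    by_contra hlt
    push_neg at hlt
    rw [Metric.infDist_lt_iff hVne] at hlt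
    obtain ⟨y, hy, hdy⟩ := hlt
    exact absurd hdy (not_lt.mpr (pointwise y hy))
  -- upper bound for any subspace containing v
  obtain ⟨tξ, htξ⟩ := hξl
  have claimUB : ∀ W : Submodule ℝ (EuclideanSpace ℝ (Fin d)), v ∈ W →
      Metric.infDist x ({z : EuclideanSpace ℝ (Fin d) | ∃ w ∈ W, z = x + w} ∩ {y | ‖y‖ = 1}) ≤ a := by
    intro W hvW
    have hmem : ξ ∈ {z : EuclideanSpace ℝ (Fin d) | ∃ w ∈ W, z = x + w} ∩ {y | ‖y‖ = 1} :=
      ⟨⟨tξ • v, W.smul_mem tξ hvW, htξ⟩, hξs⟩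
    calc Metric.infDist x _ ≤ dist x ξ := Metric.infDist_le_dist_of_mem hmem
    _ = a := by rw [dist_eq_norm]
  constructor
  · exact ⟨V, hVrank, hvV, claim1⟩
  · -- both sups equal a
    set f : Submodule ℝ (EuclideanSpace ℝ (Fin d)) → ℝ := fun W =>
      Metric.infDist x ({z : EuclideanSpace ℝ (Fin d) | ∃ w ∈ W, z = x + w} ∩ {y | ‖y‖ = 1}) with hf
    have hsup : ∀ (S : Set (Submodule ℝ (EuclideanSpace ℝ (Fin d)))),
        (∀ W ∈ S, v ∈ W) → ∀ V₀ ∈ S, a ≤ f V₀ → (⨆ W ∈ S, f W) = a := by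
      intro S hS V₀ hV₀ haV₀
      apply le_antisymm
      · exact Real.iSup_le (fun W => Real.iSup_le (fun hW => claimUB W (hS W hW)) ha0) ha0
      · have hbdd : BddAbove (Set.range fun W => ⨆ (_ : W ∈ S), f W) := by
          refine ⟨a, ?_⟩
          rintro _ ⟨W, rfl⟩
          exact Real.iSup_le (fun hW => claimUB W (hS W hW)) ha0
        calc a ≤ ⨆ (_ : V₀ ∈ S), f V₀ := by rw [ciSup_pos hV₀]; exact haV₀
        _ ≤ ⨆ W ∈ S, f W := le_ciSup hbdd V₀
    have hseteq : {z : EuclideanSpace ℝ (Fin d) | ∃ w ∈ (ℝ ∙ v : Submodule ℝ (EuclideanSpace ℝ (Fin d))), z = x + w}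
        = {z : EuclideanSpace ℝ (Fin d) | ∃ t : ℝ, z = x + t • v} := by
      ext z
      simp only [Set.mem_setOf_eq, Submodule.mem_span_singleton]
      constructor
      · rintro ⟨w, ⟨t, rfl⟩, rfl⟩; exact ⟨t, rfl⟩
      · rintro ⟨t, rfl⟩; exact ⟨t • v, ⟨t, rfl⟩, rfl⟩
    have hRa : a ≤ f (ℝ ∙ v) := by
      show a ≤ Metric.infDist x _
      rw [hseteq, ← hξd]
    have hL := hsup {W : Submodule ℝ (EuclideanSpace ℝ (Fin d)) | finrank ℝ W = d - 1 ∧ v ∈ W}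
      (fun W hW => hW.2) V ⟨hVrank, hvV⟩ claim1
    have hR := hsup {W : Submodule ℝ (EuclideanSpace ℝ (Fin d)) | finrank ℝ W = 1 ∧ v ∈ W}
      (fun W hW => hW.2) (ℝ ∙ v)
      ⟨finrank_span_singleton hv, Submodule.mem_span_singleton_self v⟩ hRa
    exact hL.trans hR.symm
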